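/- In the setting of the regularized gradient descent theorem under the CL condition — g : ℝ^p → [0,∞) twice continuously differentiable and L-smooth, h : ℝ^p → [0,∞) subdifferentiable, x⁰ with g(x⁰) ≠ 0, r > 0, χ := χ(g, x⁰, r), ε ∈ (0,1) and γ ∈ (0,ε) with 4g(x⁰) < ((1−ε)/(1+γ))²r²χ, bounds L₁ ≥ sup_{B̄(x⁰,r)}‖∇g‖_∞, L₂ ≥ sup over B̄(x⁰,2r) of the absolute second partials of g, L_h ≥ sup{‖H‖₂ : H ∈ ∂h(y), y ∈ B̄(x⁰,r)}, β ∈ (0, β_max] with β_max·sup{‖H‖₂ : H ∈ ∂h(x⁰)} ≤ γ‖∇g(x⁰)‖₂, step size α > 0 with α√p(L₁ + β_max L_h) < r, αL₂p < 2(ε−γ) and additionally α(1+γ)L < 1, δ := min{1, (1−ε)χα}, and iterates x^{(k+1)} = x^{(k)} − α(∇g(x^{(k)}) + βH_k), H_k ∈ ∂h(x^{(k)}), x^{(0)} = x⁰ — set τ := 1 − (1+γ)αL ∈ (0,1) and suppose γ‖∇g(x⁰)‖₂ ≥ βL_h/τ^k for some integer k ≥ 1. Then for every 0 ≤ j ≤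 k: γ‖∇g(x^{(j)})‖₂ ≥ βL_h/τ^{k−j} and β·sup{‖H‖₂ : H ∈ ∂h(x^{(j)})} ≤ γ‖∇g(x^{(j)})‖₂; moreover ‖∇g(x^{(k+1)})‖₂ ≥ τβL_h. As a consequence: x^{(1)}, …, x^{(k)} ∈ B̄(x⁰, r); g(x^{(j)}) ≤ (1−δ)^j g(x⁰) and ‖∇g(x^{(j)})‖₂² ≤ 2L·g(x^{(j)}) for all 0 ≤ j ≤ k; and ‖x^{(k)} − x^{(j)}‖₂² ≤ (1−δ)^j r² for all 0 ≤ j < k. -/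

import Mathlib

open Set Finset

/-- `z` is a subgradient of `h` at `x`. -/
def IsSubgradientAt {p : ℕ} (h : EuclideanSpace ℝ (Fin p) → ℝ)
    (z x : EuclideanSpace ℝ (Fin p)) : Prop :=
  ∀ y, h x + (inner ℝ z (y - x) : ℝ) ≤ h y

/-- The Chatterjee–Łojasiewicz constant of a differentiable function `g` (with gradient `G`)
at `x₀` with radius `r`. -/
noncomputable def chiCL {p : ℕ} (g : EuclideanSpace ℝ (Fin p) → ℝ)
    (G : EuclideanSpace ℝ (Fin p) → EuclideanSpace ℝ (Fin p))
    (x₀ : EuclideanSpace ℝ (Fin p)) (r : ℝ) : ℝ :=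
  sInf {s | ∃ y ∈ Metric.closedBall x₀ r, g y ≠ 0 ∧ s = ‖G y‖ ^ 2 / g y}

section Helpers

variable {p : ℕ}




/-- monotonicity from derivative bound -/
lemma mono_of_hasDerivAt {ψ ψd : ℝ → ℝ} (h : ∀ t, HasDerivAt ψ (ψd t) t) {a b : ℝ}
    (hab : a ≤ b) (hd : ∀ t ∈ Set.Icc a b, ψd t ≤ 0) : ψ b ≤ ψ a := by
  have hdiff : Differentiable ℝ ψ := fun t => (h t).differentiableAt
  have hanti := antitoneOn_of_deriv_nonpos (convex_Icc a b)
    hdiff.continuous.continuousOn hdiff.differentiableOn ?_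
  · exact hanti (left_mem_Icc.2 hab) (right_mem_Icc.2 hab) hab
  · intro t ht
    rw [interior_Icc] at ht
    rw [(h t).deriv]
    exact hd t (Ioo_subset_Icc_self ht)

lemma grad_line (g : EuclideanSpace ℝ (Fin p) → ℝ) (G : EuclideanSpace ℝ (Fin p) → EuclideanSpace ℝ (Fin p)) (hgrad : ∀ x, HasGradientAt g (G x) x)
    (y d : EuclideanSpace ℝ (Fin p)) (t : ℝ) :
    HasDerivAt (fun s : ℝ => g (y + s • d)) (inner ℝ (G (y + t • d)) d : ℝ) t := by
  have hline : HasDerivAt (fun s : ℝ => y + s • d) d t := by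
    simpa using ((hasDerivAt_id t).smul_const d).const_add y
  have := (hgrad (y + t • d)).hasFDerivAt.comp_hasDerivAt t hline
  rw [InnerProductSpace.toDual_apply_apply] at this
  exact this

lemma descent_general (g : EuclideanSpace ℝ (Fin p) → ℝ) (G : EuclideanSpace ℝ (Fin p) → EuclideanSpace ℝ (Fin p)) (hgrad : ∀ x, HasGradientAt g (G x) x)
    (y d : EuclideanSpace ℝ (Fin p)) (Q : ℝ)
    (hQ : ∀ t ∈ Set.Icc (0:ℝ) 1, (inner ℝ (G (y + t • d) - G y) d : ℝ) ≤ Q * t * ‖d‖ ^ 2) :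
    g (y + d) ≤ g y + (inner ℝ (G y) d : ℝ) + Q / 2 * ‖d‖ ^ 2 := by
  set c : ℝ := (inner ℝ (G y) d : ℝ)
  set ψ : ℝ → ℝ := fun t => g (y + t • d) - t * c - Q * t ^ 2 / 2 * ‖d‖ ^ 2 with hψ
  have hde : ∀ t : ℝ, HasDerivAt ψ
      ((inner ℝ (G (y + t • d)) d : ℝ) - c - Q * t * ‖d‖ ^ 2) t := by
    intro t
    have h1 := grad_line g G hgrad y d t
    have h2 : HasDerivAt (fun s : ℝ => s * c) c t := by
      simpa using (hasDerivAt_id t).mul_const c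
    have h3 : HasDerivAt (fun s : ℝ => Q * s ^ 2 / 2 * ‖d‖ ^ 2) (Q * t * ‖d‖ ^ 2) t := by
      have : HasDerivAt (fun s : ℝ => s ^ 2) (2 * t) t := by
        simpa using hasDerivAt_pow 2 t
      have := ((this.const_mul Q).div_const 2).mul_const (‖d‖ ^ 2)
      refine this.congr_deriv ?_
      ring
    exact (h1.sub h2).sub h3
  have hmono : ψ 1 ≤ ψ 0 := by
    apply mono_of_hasDerivAt hde zero_le_one
    intro t ht
    have := hQ t ht
    have hexp : (inner ℝ (G (y + t • d) - G y) d : ℝ)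
        = (inner ℝ (G (y + t • d)) d : ℝ) - c := by
      simp [c, inner_sub_left]
    linarith [hexp ▸ this]
  have h0 : ψ 0 = g y := by simp [ψ]
  have h1 : ψ 1 = g (y + d) - c - Q / 2 * ‖d‖ ^ 2 := by
    simp only [ψ, one_smul, one_pow, one_mul]
    ring
  rw [h0, h1] at hmono
  linarith

lemma grad_sq_le_two_mul_smul (g : EuclideanSpace ℝ (Fin p) → ℝ) (G : EuclideanSpace ℝ (Fin p) → EuclideanSpace ℝ (Fin p)) (hgrad : ∀ x, HasGradientAt g (G x) x)
    (hg_nonneg : ∀ x, 0 ≤ g x) (L : ℝ) (hL : 0 < L)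
    (hsmooth : ∀ x y, ‖G y - G x‖ ≤ L * ‖y - x‖) (y : EuclideanSpace ℝ (Fin p)) :
    ‖G y‖ ^ 2 ≤ 2 * L * g y := by
  set d : EuclideanSpace ℝ (Fin p) := -((1 / L) • G y) with hd
  have hdesc := descent_general g G hgrad y d L ?_
  · have hnd : ‖d‖ = (1 / L) * ‖G y‖ := by
      rw [hd, norm_neg, norm_smul, Real.norm_eq_abs, abs_of_pos (one_div_pos.2 hL)]
    have hinner : (inner ℝ (G y) d : ℝ) = -((1 / L) * ‖G y‖ ^ 2) := by
      rw [hd, inner_neg_right, real_inner_smul_right, real_inner_self_eq_norm_sq]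
    have h0 := hg_nonneg (y + d)
    rw [hinner, hnd] at hdesc
    have key : 0 ≤ g y + -((1 / L) * ‖G y‖ ^ 2) + L / 2 * ((1 / L) * ‖G y‖) ^ 2 :=
      le_trans h0 hdesc
    have hL' : L ≠ 0 := ne_of_gt hL
    have e2 : (2 * L) * (g y + -((1 / L) * ‖G y‖ ^ 2) + L / 2 * ((1 / L) * ‖G y‖) ^ 2)
        = 2 * L * g y - ‖G y‖ ^ 2 := by
      field_simp
      ring
    nlinarith [mul_nonneg (by linarith : (0:ℝ) ≤ 2 * L) key, e2]
  · intro t ht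
    have h1 : (inner ℝ (G (y + t • d) - G y) d : ℝ) ≤ ‖G (y + t • d) - G y‖ * ‖d‖ :=
      real_inner_le_norm _ _
    have h2 : ‖G (y + t • d) - G y‖ ≤ L * ‖(y + t • d) - y‖ := hsmooth y (y + t • d)
    have h3 : ‖(y + t • d) - y‖ = t * ‖d‖ := by
      rw [add_sub_cancel_left, norm_smul, Real.norm_eq_abs, abs_of_nonneg ht.1]
    calc (inner ℝ (G (y + t • d) - G y) d : ℝ) ≤ ‖G (y + t • d) - G y‖ * ‖d‖ := h1
      _ ≤ L * (t * ‖d‖) * ‖d‖ := by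
          apply mul_le_mul_of_nonneg_right _ (norm_nonneg d)
          rw [← h3]; exact h2
      _ = L * t * ‖d‖ ^ 2 := by ring




lemma eucl_decomp (d : EuclideanSpace ℝ (Fin p)) : d = ∑ i : Fin p, (d i) • EuclideanSpace.single i (1:ℝ) := by
  ext j
  have : (∑ i : Fin p, (d i) • EuclideanSpace.single i (1:ℝ)) j
      = ∑ i : Fin p, ((d i) • EuclideanSpace.single i (1:ℝ)) j :=
    by simp only [WithLp.ofLp_sum, Finset.sum_apply]
  rw [this]
  simp [EuclideanSpace.single_apply]

lemma eucl_norm_sq (d : EuclideanSpace ℝ (Fin p)) : ‖d‖ ^ 2 = ∑ i : Fin p, (d i) ^ 2 := by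
  rw [EuclideanSpace.norm_eq, Real.sq_sqrt (by positivity)]
  simp [sq_abs]

lemma eucl_one_norm_sq (d : EuclideanSpace ℝ (Fin p)) : (∑ i : Fin p, |d i|) ^ 2 ≤ (p : ℝ) * ‖d‖ ^ 2 := by
  have h := sq_sum_le_card_mul_sum_sq (s := (univ : Finset (Fin p))) (f := fun i => |d i|)
  rw [eucl_norm_sq]
  simpa [sq_abs] using h

lemma hessian_apply_bound (g : EuclideanSpace ℝ (Fin p) → ℝ) (x₀ : EuclideanSpace ℝ (Fin p)) (R L₂ : ℝ) (hL₂0 : 0 ≤ L₂)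
    (hL₂ : ∀ y ∈ Metric.closedBall x₀ R, ∀ i j,
      |iteratedFDeriv ℝ 2 g y ![EuclideanSpace.single i 1, EuclideanSpace.single j 1]| ≤ L₂)
    (z : EuclideanSpace ℝ (Fin p)) (hz : z ∈ Metric.closedBall x₀ R) (d : EuclideanSpace ℝ (Fin p)) :
    fderiv ℝ (fderiv ℝ g) z d d ≤ (p : ℝ) * L₂ * ‖d‖ ^ 2 := by
  set B := fderiv ℝ (fderiv ℝ g) z with hB
  have hentry : ∀ i j : Fin p, |B (EuclideanSpace.single i 1) (EuclideanSpace.single j 1)| ≤ L₂ := by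
    intro i j
    have := hL₂ z hz i j
    rwa [iteratedFDeriv_two_apply] at this
  have h2 : ∀ (T : EuclideanSpace ℝ (Fin p) →L[ℝ] ℝ),
      T d = ∑ i : Fin p, d i * T (EuclideanSpace.single i 1) := by
    intro T
    conv_lhs => rw [eucl_decomp d]
    rw [map_sum]
    simp
  have hexp : B d d = ∑ i : Fin p, ∑ j : Fin p,
      (d i) * (d j) * B (EuclideanSpace.single i 1) (EuclideanSpace.single j 1) := by
    rw [h2 (B d)]
    have hflip : ∀ j : Fin p, B d (EuclideanSpace.single j 1)
        = ∑ i : Fin p, d i * B (EuclideanSpace.single i 1) (EuclideanSpace.single j 1) := by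
      intro j
      have := h2 (B.flip (EuclideanSpace.single j 1))
      simpa [ContinuousLinearMap.flip_apply] using this
    rw [Finset.sum_congr rfl (fun j _ => by rw [hflip j])]
    rw [Finset.sum_comm]
    congr 1; ext i
    rw [Finset.mul_sum]
    congr 1; ext j
    ring
  rw [hexp]
  calc (∑ i : Fin p, ∑ j : Fin p,
      (d i) * (d j) * B (EuclideanSpace.single i 1) (EuclideanSpace.single j 1))
      ≤ ∑ i : Fin p, ∑ j : Fin p, |d i| * |d j| * L₂ := by
        apply Finset.sum_le_sum; intro i _
        apply Finset.sum_le_sum; intro j _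
        calc (d i) * (d j) * B (EuclideanSpace.single i 1) (EuclideanSpace.single j 1)
            ≤ |(d i) * (d j) * B (EuclideanSpace.single i 1) (EuclideanSpace.single j 1)| :=
              le_abs_self _
          _ = |d i| * |d j| * |B (EuclideanSpace.single i 1) (EuclideanSpace.single j 1)| := by
              rw [abs_mul, abs_mul]
          _ ≤ |d i| * |d j| * L₂ := by
              apply mul_le_mul_of_nonneg_left (hentry i j) (by positivity)
    _ = (∑ i : Fin p, |d i|) ^ 2 * L₂ := by
        rw [sq, Finset.sum_mul_sum]
        rw [Finset.sum_mul]
        congr 1; ext i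
        rw [Finset.sum_mul]
    _ ≤ (p : ℝ) * ‖d‖ ^ 2 * L₂ := by
        apply mul_le_mul_of_nonneg_right (eucl_one_norm_sq d) hL₂0
    _ = (p : ℝ) * L₂ * ‖d‖ ^ 2 := by ring




lemma fderiv_eq_toDual (g : EuclideanSpace ℝ (Fin p) → ℝ) (G : EuclideanSpace ℝ (Fin p) → EuclideanSpace ℝ (Fin p)) (hgrad : ∀ x, HasGradientAt g (G x) x)
    (z : EuclideanSpace ℝ (Fin p)) : fderiv ℝ g z = InnerProductSpace.toDual ℝ _ (G z) :=
  (hgrad z).hasFDerivAt.fderiv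

lemma inner_grad_diff_bound (g : EuclideanSpace ℝ (Fin p) → ℝ) (G : EuclideanSpace ℝ (Fin p) → EuclideanSpace ℝ (Fin p)) (hgC2 : ContDiff ℝ 2 g)
    (hgrad : ∀ x, HasGradientAt g (G x) x) (x₀ : EuclideanSpace ℝ (Fin p)) (R L₂ : ℝ) (hL₂0 : 0 ≤ L₂)
    (hL₂ : ∀ y ∈ Metric.closedBall x₀ R, ∀ i j,
      |iteratedFDeriv ℝ 2 g y ![EuclideanSpace.single i 1, EuclideanSpace.single j 1]| ≤ L₂)
    (y d : EuclideanSpace ℝ (Fin p)) (hseg : ∀ t ∈ Set.Icc (0:ℝ) 1, y + t • d ∈ Metric.closedBall x₀ R) :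
    ∀ t ∈ Set.Icc (0:ℝ) 1,
      (inner ℝ (G (y + t • d) - G y) d : ℝ) ≤ ((p : ℝ) * L₂) * t * ‖d‖ ^ 2 := by
  intro t ht
  set F := fderiv ℝ g with hF
  have hFC1 : ContDiff ℝ 1 F := hgC2.fderiv_right (by norm_num)
  set φ : ℝ → ℝ := fun s => F (y + s • d) d with hφ
  have hφval : ∀ s : ℝ, φ s = (inner ℝ (G (y + s • d)) d : ℝ) := by
    intro s
    rw [hφ]
    simp only [hF, fderiv_eq_toDual g G hgrad, InnerProductSpace.toDual_apply_apply]
  have hline : ∀ s : ℝ, HasDerivAt (fun u : ℝ => y + u • d) d s := by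
    intro s
    simpa using ((hasDerivAt_id s).smul_const d).const_add y
  have hφd : ∀ s : ℝ, HasDerivAt φ ((fderiv ℝ F (y + s • d)) d d) s := by
    intro s
    have hA : HasDerivAt (fun u : ℝ => F (y + u • d)) (fderiv ℝ F (y + s • d) d) s :=
      ((hFC1.differentiable one_ne_zero (y + s • d)).hasFDerivAt).comp_hasDerivAt s (hline s)
    have := hA.clm_apply (hasDerivAt_const s d)
    simpa using this
  set ψ : ℝ → ℝ := fun s => φ s - ((p : ℝ) * L₂ * ‖d‖ ^ 2) * s with hψ
  have hψd : ∀ s : ℝ, HasDerivAt ψ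
      ((fderiv ℝ F (y + s • d)) d d - (p : ℝ) * L₂ * ‖d‖ ^ 2) s := by
    intro s
    have h2 : HasDerivAt (fun u : ℝ => ((p : ℝ) * L₂ * ‖d‖ ^ 2) * u)
        ((p : ℝ) * L₂ * ‖d‖ ^ 2) s := by
      simpa using (hasDerivAt_id s).const_mul ((p : ℝ) * L₂ * ‖d‖ ^ 2)
    exact (hφd s).sub h2
  have hmono : ψ t ≤ ψ 0 := by
    apply mono_of_hasDerivAt hψd ht.1
    intro s hs
    have hs1 : s ∈ Set.Icc (0:ℝ) 1 := ⟨hs.1, le_trans hs.2 ht.2⟩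
    have hball := hseg s hs1
    have := hessian_apply_bound g x₀ R L₂ hL₂0 hL₂ (y + s • d) hball d
    linarith
  have h0 : ψ 0 = (inner ℝ (G y) d : ℝ) := by
    rw [hψ]
    simp only [hφval]
    simp
  have hteq : ψ t = (inner ℝ (G (y + t • d)) d : ℝ) - ((p : ℝ) * L₂ * ‖d‖ ^ 2) * t := by
    simp only [hψ, hφval]
  rw [hteq, h0] at hmono
  rw [inner_sub_left]
  linarith

lemma taylor_local (g : EuclideanSpace ℝ (Fin p) → ℝ) (G : EuclideanSpace ℝ (Fin p) → EuclideanSpace ℝ (Fin p)) (hgC2 : ContDiff ℝ 2 g)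
    (hgrad : ∀ x, HasGradientAt g (G x) x) (x₀ : EuclideanSpace ℝ (Fin p)) (R L₂ : ℝ) (hL₂0 : 0 ≤ L₂)
    (hL₂ : ∀ y ∈ Metric.closedBall x₀ R, ∀ i j,
      |iteratedFDeriv ℝ 2 g y ![EuclideanSpace.single i 1, EuclideanSpace.single j 1]| ≤ L₂)
    (y d : EuclideanSpace ℝ (Fin p)) (hseg : ∀ t ∈ Set.Icc (0:ℝ) 1, y + t • d ∈ Metric.closedBall x₀ R) :
    g (y + d) ≤ g y + (inner ℝ (G y) d : ℝ) + ((p : ℝ) * L₂) / 2 * ‖d‖ ^ 2 :=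
  descent_general g G hgrad y d ((p : ℝ) * L₂)
    (inner_grad_diff_bound g G hgC2 hgrad x₀ R L₂ hL₂0 hL₂ y d hseg)


lemma gain_scalar (Nsq tt ss a ε γ : ℝ) (hN : 0 ≤ Nsq)
    (h1 : -(γ * Nsq) ≤ tt) (h1' : tt ≤ γ * Nsq) (h3 : ss ≤ γ ^ 2 * Nsq)
    (ha0 : 0 ≤ a) (ha : a ≤ 2 * (ε - γ)) (hγ : 0 < γ) (hγε : γ < ε) (hε : ε < 1) :
    a * (Nsq + 2 * tt + ss) ≤ 2 * (Nsq + tt) - 2 * (1 - ε) * Nsq := by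
  have hB : 0 ≤ a * (γ ^ 2 * Nsq - ss) := mul_nonneg ha0 (by linarith)
  rcases le_total a 1 with hc1 | hc1
  · have hA : 0 ≤ (2 - 2 * a) * (tt + γ * Nsq) :=
      mul_nonneg (by linarith) (by linarith)
    have hC : 0 ≤ Nsq * (1 - γ) ^ 2 * (2 * (ε - γ) - a) :=
      mul_nonneg (mul_nonneg hN (sq_nonneg _)) (by linarith)
    have hD : 0 ≤ (ε - γ) * γ * (2 - γ) * Nsq :=
      mul_nonneg (mul_nonneg (mul_nonneg (by linarith) hγ.le) (by linarith)) hN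
    nlinarith [hA, hB, hC, hD]
  · have hA : 0 ≤ (2 * a - 2) * (γ * Nsq - tt) :=
      mul_nonneg (by linarith) (by linarith)
    have hC : 0 ≤ Nsq * (1 + γ) ^ 2 * (2 * (ε - γ) - a) :=
      mul_nonneg (mul_nonneg hN (sq_nonneg _)) (by linarith)
    have hD1 : 0 ≤ 2 * γ * Nsq * (2 * (1 - ε)) :=
      mul_nonneg (mul_nonneg (mul_nonneg (by norm_num) hγ.le) hN) (by linarith)
    have hD2 : 0 ≤ 2 * γ ^ 2 * Nsq * (2 - ε) :=
      mul_nonneg (mul_nonneg (by positivity) hN) (by linarith)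
    have hD3 : 0 ≤ 2 * γ ^ 3 * Nsq := by positivity
    nlinarith [hA, hB, hC, hD1, hD2, hD3]

lemma step_bound_scalar (N A1 A2 c αv ε γv : ℝ) (hA1 : 0 < A1) (hA2 : 0 ≤ A2)
    (h21 : A2 ≤ A1) (hc : 0 < c) (hε : ε < 1) (hγ : 0 < γv) (hα : 0 < αv)
    (hN : c * A1 ≤ N) (hgain : (1 - ε) * αv * N ^ 2 ≤ A1 ^ 2 - A2 ^ 2) :
    αv * (1 + γv) * N ≤ 2 * (1 + γv) / ((1 - ε) * c) * (A1 - A2) := by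
  have h0 : 0 < (1 - ε) * c := by nlinarith
  rw [div_mul_eq_mul_div, le_div_iff₀ h0]
  have hNpos : 0 < N := lt_of_lt_of_le (mul_pos hc hA1) hN
  have key : αv * N * ((1 - ε) * c) * A1 ≤ 2 * A1 * (A1 - A2) := by
    nlinarith [mul_le_mul_of_nonneg_left hN
        (mul_nonneg (mul_nonneg (by linarith : (0:ℝ) ≤ 1 - ε) hα.le) hNpos.le),
      mul_nonneg hA2 (by linarith : (0:ℝ) ≤ A1 - A2)]
  have key2 : αv * N * ((1 - ε) * c) ≤ 2 * (A1 - A2) := by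
    have h := (mul_le_mul_iff_of_pos_right hA1).mp
      (by linarith [key] : αv * N * ((1 - ε) * c) * A1 ≤ (2 * (A1 - A2)) * A1)
    linarith
  nlinarith [mul_le_mul_of_nonneg_left key2 (by linarith : (0:ℝ) ≤ 1 + γv)]


end Helpers

set_option maxHeartbeats 2000000 in
theorem memorization_time_under_CL
    {p : ℕ} (g h : EuclideanSpace ℝ (Fin p) → ℝ)
    (G : EuclideanSpace ℝ (Fin p) → EuclideanSpace ℝ (Fin p))
    (hgC2 : ContDiff ℝ 2 g) (hg_nonneg : ∀ x, 0 ≤ g x)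
    (hgrad : ∀ x, HasGradientAt g (G x) x)
    (L : ℝ) (hL : 0 < L) (hsmooth : ∀ x y, ‖G y - G x‖ ≤ L * ‖y - x‖)
    (hh_nonneg : ∀ x, 0 ≤ h x)
    (hh_sub : ∀ x, ∃ z, IsSubgradientAt h z x)
    (x₀ : EuclideanSpace ℝ (Fin p)) (hgx₀ : g x₀ ≠ 0) (r : ℝ) (hr : 0 < r)
    (χ : ℝ) (hχ : χ = chiCL g G x₀ r)
    (ε γ : ℝ) (hε0 : 0 < ε) (hε1 : ε < 1) (hγ0 : 0 < γ) (hγε : γ < ε)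
    (hCL : 4 * g x₀ < ((1 - ε) / (1 + γ)) ^ 2 * r ^ 2 * χ)
    (L₁ L₂ Lh : ℝ)
    (hL₁ : ∀ y ∈ Metric.closedBall x₀ r, ∀ i, |G y i| ≤ L₁)
    (hL₂ : ∀ y ∈ Metric.closedBall x₀ (2 * r), ∀ i j,
      |iteratedFDeriv ℝ 2 g y ![EuclideanSpace.single i 1, EuclideanSpace.single j 1]| ≤ L₂)
    (hLh : ∀ y ∈ Metric.closedBall x₀ r, ∀ z, IsSubgradientAt h z y → ‖z‖ ≤ Lh)
    (βmax : ℝ) (hβmax : 0 < βmax)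
    (hβmax_dom : ∀ z, IsSubgradientAt h z x₀ → βmax * ‖z‖ ≤ γ * ‖G x₀‖)
    (β : ℝ) (hβ0 : 0 < β) (hβ : β ≤ βmax)
    (α : ℝ) (hα0 : 0 < α)
    (hα1 : α * Real.sqrt p * (L₁ + βmax * Lh) < r) (hα2 : α * L₂ * p < 2 * (ε - γ))
    (hα3 : α * (1 + γ) * L < 1)
    (δ : ℝ) (hδ : δ = min 1 ((1 - ε) * χ * α))
    (τ : ℝ) (hτ : τ = 1 - (1 + γ) * α * L)
    (x H : ℕ → EuclideanSpace ℝ (Fin p)) (hx0 : x 0 = x₀)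
    (hH : ∀ k, IsSubgradientAt h (H k) (x k))
    (hrec : ∀ k, x (k + 1) = x k - α • (G (x k) + β • H k))
    (k : ℕ) (hk : 1 ≤ k)
    (hdom0 : γ * ‖G x₀‖ ≥ β * Lh / τ ^ k) :
    (0 < τ ∧ τ < 1) ∧
    (∀ j, j ≤ k → γ * ‖G (x j)‖ ≥ β * Lh / τ ^ (k - j)) ∧
    (∀ j, j ≤ k → ∀ z, IsSubgradientAt h z (x j) → β * ‖z‖ ≤ γ * ‖G (x j)‖) ∧
    ‖G (x (k + 1))‖ ≥ τ * β * Lh ∧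
    (∀ j, 1 ≤ j → j ≤ k → x j ∈ Metric.closedBall x₀ r) ∧
    (∀ j, j ≤ k → g (x j) ≤ (1 - δ) ^ j * g x₀) ∧
    (∀ j, j ≤ k → ‖G (x j)‖ ^ 2 ≤ 2 * L * g (x j)) ∧
    (∀ j, j < k → ‖x k - x j‖ ^ 2 ≤ (1 - δ) ^ j * r ^ 2) := by
  -- ## basic positivity facts
  have hg0pos : 0 < g x₀ := lt_of_le_of_ne (hg_nonneg x₀) (Ne.symm hgx₀)
  have hLh0 : 0 ≤ Lh := by
    obtain ⟨z, hz⟩ := hh_sub x₀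
    exact le_trans (norm_nonneg z) (hLh x₀ (Metric.mem_closedBall_self hr.le) z hz)
  have hχpos : 0 < χ := by
    by_contra hno
    push_neg at hno
    have : ((1 - ε) / (1 + γ)) ^ 2 * r ^ 2 * χ ≤ 0 :=
      mul_nonpos_of_nonneg_of_nonpos (by positivity) hno
    linarith only [hCL, this, hg0pos]
  have hτpos : 0 < τ := by rw [hτ]; linarith only [hα3]
  have hτlt1 : τ < 1 := by
    rw [hτ]
    linarith only [mul_pos (mul_pos hα0 (show (0:ℝ) < 1 + γ by linarith only [hγ0])) hL]
  have hGsq : ∀ y, ‖G y‖ ^ 2 ≤ 2 * L * g y :=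
    grad_sq_le_two_mul_smul g G hgrad hg_nonneg L hL hsmooth
  -- ## the CL inequality on the ball
  have hCLineq : ∀ y ∈ Metric.closedBall x₀ r, χ * g y ≤ ‖G y‖ ^ 2 := by
    intro y hy
    by_cases hgy : g y = 0
    · rw [hgy]
      simpa using sq_nonneg ‖G y‖
    · have hgypos : 0 < g y := lt_of_le_of_ne (hg_nonneg y) (Ne.symm hgy)
      have hbdd : BddBelow {s | ∃ y ∈ Metric.closedBall x₀ r, g y ≠ 0 ∧ s = ‖G y‖ ^ 2 / g y} := by
        refine ⟨0, ?_⟩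
        rintro s ⟨y', hy', hgy', rfl⟩
        have hy'pos : 0 < g y' := lt_of_le_of_ne (hg_nonneg y') (Ne.symm hgy')
        positivity
      have hle : χ ≤ ‖G y‖ ^ 2 / g y := by
        rw [hχ]
        exact csInf_le hbdd ⟨y, hy, hgy, rfl⟩
      calc χ * g y ≤ (‖G y‖ ^ 2 / g y) * g y := mul_le_mul_of_nonneg_right hle (hg_nonneg y)
        _ = ‖G y‖ ^ 2 := by field_simp
  -- ## p ≥ 1
  have hp : 1 ≤ p := by
    by_contra hp0
    push_neg at hp0
    interval_cases p
    have hGz : ‖G x₀‖ = (0:ℝ) := by simp [EuclideanSpace.norm_eq]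
    have hc := hCLineq x₀ (Metric.mem_closedBall_self hr.le)
    rw [hGz] at hc
    linarith only [hc, mul_pos hχpos hg0pos]
  have hp1 : (1:ℝ) ≤ Real.sqrt p := by
    rw [show (1:ℝ) = Real.sqrt 1 by simp]
    exact Real.sqrt_le_sqrt (by exact_mod_cast hp)
  have hL₂0 : 0 ≤ L₂ := le_trans (abs_nonneg _)
    (hL₂ x₀ (Metric.mem_closedBall_self (by linarith)) ⟨0, hp⟩ ⟨0, hp⟩)
  have hL₁0 : 0 ≤ L₁ := le_trans (abs_nonneg _)
    (hL₁ x₀ (Metric.mem_closedBall_self hr.le) ⟨0, hp⟩)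
  -- ## bound on the gradient norm on the ball
  have hGbound : ∀ y ∈ Metric.closedBall x₀ r, ‖G y‖ ≤ Real.sqrt p * L₁ := by
    intro y hy
    have h1 : ‖G y‖ ^ 2 ≤ (p : ℝ) * L₁ ^ 2 := by
      rw [eucl_norm_sq]
      calc (∑ i : Fin p, (G y i) ^ 2) ≤ ∑ _i : Fin p, L₁ ^ 2 := by
            apply Finset.sum_le_sum
            intro i _
            rw [← sq_abs]
            exact pow_le_pow_left₀ (abs_nonneg _) (hL₁ y hy i) 2
        _ = (p : ℝ) * L₁ ^ 2 := by simp [mul_comm]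
    have h2 := Real.sqrt_le_sqrt h1
    rwa [Real.sqrt_sq (norm_nonneg _), Real.sqrt_mul (by positivity), Real.sqrt_sq hL₁0] at h2
  -- ## the contraction constant K
  set c := Real.sqrt χ with hc
  have hcpos : 0 < c := Real.sqrt_pos.2 hχpos
  set K := 2 * (1 + γ) / ((1 - ε) * c) with hK
  have hKpos : 0 < K := div_pos (by linarith) (mul_pos (by linarith) hcpos)
  have hKr : K * Real.sqrt (g x₀) < r := by
    have h1γ : (0:ℝ) < (1 + γ) ^ 2 := by positivity
    have keyeq : ((1 - ε) / (1 + γ)) ^ 2 * r ^ 2 * χ * (1 + γ) ^ 2 = (1 - ε) ^ 2 * r ^ 2 * χ := by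
      field_simp
    have hCL' : 4 * g x₀ * (1 + γ) ^ 2 < (1 - ε) ^ 2 * r ^ 2 * χ := by
      calc 4 * g x₀ * (1 + γ) ^ 2 < ((1 - ε) / (1 + γ)) ^ 2 * r ^ 2 * χ * (1 + γ) ^ 2 :=
            mul_lt_mul_of_pos_right hCL h1γ
        _ = (1 - ε) ^ 2 * r ^ 2 * χ := keyeq
    have hsq : (2 * (1 + γ) * Real.sqrt (g x₀)) ^ 2 < ((1 - ε) * c * r) ^ 2 := by
      have e1 : (2 * (1 + γ) * Real.sqrt (g x₀)) ^ 2 = 4 * g x₀ * (1 + γ) ^ 2 := by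
        rw [mul_pow, mul_pow, Real.sq_sqrt (hg_nonneg x₀)]
        ring
      have e2 : ((1 - ε) * c * r) ^ 2 = (1 - ε) ^ 2 * r ^ 2 * χ := by
        rw [mul_pow, mul_pow, hc, Real.sq_sqrt hχpos.le]
        ring
      rw [e1, e2]
      exact hCL'
    have hlt : 2 * (1 + γ) * Real.sqrt (g x₀) < (1 - ε) * c * r :=
      lt_of_pow_lt_pow_left₀ 2
        (mul_nonneg (mul_nonneg (by linarith) hcpos.le) hr.le) hsq
    rw [hK, div_mul_eq_mul_div, div_lt_iff₀ (mul_pos (by linarith : (0:ℝ) < 1 - ε) hcpos)]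
    calc 2 * (1 + γ) * Real.sqrt (g x₀) < (1 - ε) * c * r := hlt
      _ = r * ((1 - ε) * c) := by ring
  have hδ1 : δ ≤ 1 := by rw [hδ]; exact min_le_left _ _
  have hδle : δ ≤ (1 - ε) * χ * α := by rw [hδ]; exact min_le_right _ _
  -- ## x j is in the ball whenever all previous steps satisfy the step bound
  have ball_of : ∀ j : ℕ,
      (∀ i, i < j → ‖x (i + 1) - x i‖ ≤ K * (Real.sqrt (g (x i)) - Real.sqrt (g (x (i + 1))))) →
      x j ∈ Metric.closedBall x₀ r := by
    intro j hsteps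
    rw [Metric.mem_closedBall, dist_eq_norm]
    have htel : x j - x₀ = ∑ i ∈ Finset.range j, (x (i + 1) - x i) := by
      rw [Finset.sum_range_sub (fun i => x i), hx0]
    have h1 : ‖x j - x₀‖ ≤ ∑ i ∈ Finset.range j, ‖x (i + 1) - x i‖ := by
      rw [htel]; exact norm_sum_le _ _
    have h2 : (∑ i ∈ Finset.range j, ‖x (i + 1) - x i‖)
        ≤ K * (Real.sqrt (g (x 0)) - Real.sqrt (g (x j))) := by
      calc (∑ i ∈ Finset.range j, ‖x (i + 1) - x i‖)
          ≤ ∑ i ∈ Finset.range j,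
              K * (Real.sqrt (g (x i)) - Real.sqrt (g (x (i + 1)))) :=
            Finset.sum_le_sum (fun i hi => hsteps i (Finset.mem_range.1 hi))
        _ = K * ∑ i ∈ Finset.range j,
              (Real.sqrt (g (x i)) - Real.sqrt (g (x (i + 1)))) := by rw [Finset.mul_sum]
        _ = K * (Real.sqrt (g (x 0)) - Real.sqrt (g (x j))) := by
            rw [Finset.sum_range_sub' (fun i => Real.sqrt (g (x i)))]
    have h3 : K * (Real.sqrt (g (x 0)) - Real.sqrt (g (x j))) ≤ K * Real.sqrt (g x₀) := by
      rw [hx0]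
      exact mul_le_mul_of_nonneg_left
        (by linarith only [Real.sqrt_nonneg (g (x j))]) hKpos.le
    linarith only [h1, h2, h3, hKr]
  -- ## the one-step estimates
  have step_main : ∀ j : ℕ, x j ∈ Metric.closedBall x₀ r → β * ‖H j‖ ≤ γ * ‖G (x j)‖ →
      (‖x (j + 1) - x j‖ ≤ α * (1 + γ) * ‖G (x j)‖) ∧
      (g (x (j + 1)) ≤ g (x j) - (1 - ε) * α * ‖G (x j)‖ ^ 2) ∧
      (τ * ‖G (x j)‖ ≤ ‖G (x (j + 1))‖) := by
    intro j hball hdom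
    set N := ‖G (x j)‖ with hN
    set d : EuclideanSpace ℝ (Fin p) := -(α • (G (x j) + β • H j)) with hd
    have hstep_eq : x (j + 1) = x j + d := by
      rw [hrec j, hd, sub_eq_add_neg]
    have hvnorm : ‖G (x j) + β • H j‖ ≤ (1 + γ) * N := by
      calc ‖G (x j) + β • H j‖ ≤ ‖G (x j)‖ + ‖β • H j‖ := norm_add_le _ _
        _ = N + β * ‖H j‖ := by rw [norm_smul, Real.norm_eq_abs, abs_of_pos hβ0]
        _ ≤ N + γ * N := by linarith only [hdom]
        _ = (1 + γ) * N := by ring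
    have hdnorm : ‖d‖ = α * ‖G (x j) + β • H j‖ := by
      rw [hd, norm_neg, norm_smul, Real.norm_eq_abs, abs_of_pos hα0]
    have hs1 : ‖x (j + 1) - x j‖ ≤ α * (1 + γ) * N := by
      rw [hstep_eq, add_sub_cancel_left, hdnorm]
      calc α * ‖G (x j) + β • H j‖ ≤ α * ((1 + γ) * N) :=
            mul_le_mul_of_nonneg_left hvnorm hα0.le
        _ = α * (1 + γ) * N := by ring
    have hs3 : τ * N ≤ ‖G (x (j + 1))‖ := by
      have hdiff : ‖G (x (j + 1)) - G (x j)‖ ≤ L * ‖x (j + 1) - x j‖ := hsmooth _ _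
      have h4 : N - ‖G (x (j + 1)) - G (x j)‖ ≤ ‖G (x (j + 1))‖ := by
        have h5 := norm_sub_norm_le (G (x j)) (G (x (j + 1)))
        rw [norm_sub_rev] at h5
        linarith only [h5, hdiff, norm_nonneg (G (x (j + 1)) - G (x j))]
      have h6 : L * ‖x (j + 1) - x j‖ ≤ L * (α * (1 + γ) * N) :=
        mul_le_mul_of_nonneg_left hs1 hL.le
      rw [hτ]
      linarith only [h4, h6, hdiff]
    -- the step stays within distance r
    have hHle : β * ‖H j‖ ≤ βmax * Lh := by
      have h7 : ‖H j‖ ≤ Lh := hLh (x j) hball (H j) (hH j)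
      linarith only [mul_le_mul_of_nonneg_left h7 hβ0.le,
        mul_le_mul_of_nonneg_right hβ hLh0]
    have hdr : ‖d‖ ≤ r := by
      have h8 : ‖G (x j)‖ ≤ Real.sqrt p * L₁ := hGbound (x j) hball
      have h9 : ‖d‖ ≤ α * (Real.sqrt p * L₁ + βmax * Lh) := by
        rw [hdnorm]
        have hna := norm_add_le (G (x j)) (β • H j)
        rw [norm_smul, Real.norm_eq_abs, abs_of_pos hβ0] at hna
        exact mul_le_mul_of_nonneg_left (by linarith only [hna, h8, hHle]) hα0.le
      have h10 : α * (Real.sqrt p * L₁ + βmax * Lh) ≤ α * Real.sqrt p * (L₁ + βmax * Lh) := by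
        have h11 := mul_nonneg (mul_nonneg hα0.le
          (show (0:ℝ) ≤ Real.sqrt p - 1 by linarith only [hp1]))
          (mul_nonneg hβmax.le hLh0)
        linarith only [h11]
      linarith only [h9, h10, hα1]
    have hseg : ∀ t ∈ Set.Icc (0:ℝ) 1, x j + t • d ∈ Metric.closedBall x₀ (2 * r) := by
      intro t ht
      rw [Metric.mem_closedBall, dist_eq_norm]
      have he : x j + t • d - x₀ = (x j - x₀) + t • d := by abel
      rw [he]
      have hb1 : ‖x j - x₀‖ ≤ r := by
        rw [← dist_eq_norm]
        exact Metric.mem_closedBall.1 hball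
      have hb2 : ‖t • d‖ ≤ r := by
        rw [norm_smul, Real.norm_eq_abs, abs_of_nonneg ht.1]
        linarith only [mul_le_mul_of_nonneg_right ht.2 (norm_nonneg d), hdr]
      calc ‖(x j - x₀) + t • d‖ ≤ ‖x j - x₀‖ + ‖t • d‖ := norm_add_le _ _
        _ ≤ 2 * r := by linarith only [hb1, hb2]
    have htaylor := taylor_local g G hgC2 hgrad x₀ (2 * r) L₂ hL₂0 hL₂ (x j) d hseg
    set tt := β * (inner ℝ (G (x j)) (H j) : ℝ) with htt
    have hinner_d : (inner ℝ (G (x j)) d : ℝ) = -(α * (N ^ 2 + tt)) := by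
      rw [hd, inner_neg_right, inner_smul_right, inner_add_right, inner_smul_right,
        real_inner_self_eq_norm_sq]
    have hd_sq : ‖d‖ ^ 2 = α ^ 2 * (N ^ 2 + 2 * tt + β ^ 2 * ‖H j‖ ^ 2) := by
      rw [hdnorm, mul_pow]
      have hexp : ‖G (x j) + β • H j‖ ^ 2
          = N ^ 2 + 2 * tt + β ^ 2 * ‖H j‖ ^ 2 := by
        rw [norm_add_sq_real, inner_smul_right, norm_smul, Real.norm_eq_abs, abs_of_pos hβ0]
        rw [htt, hN]
        ring
      rw [hexp]
    have htt_abs : |tt| ≤ γ * N ^ 2 := by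
      rw [htt, abs_mul, abs_of_pos hβ0]
      calc β * |(inner ℝ (G (x j)) (H j) : ℝ)| ≤ β * (‖G (x j)‖ * ‖H j‖) :=
            mul_le_mul_of_nonneg_left (abs_real_inner_le_norm _ _) hβ0.le
        _ = N * (β * ‖H j‖) := by ring
        _ ≤ N * (γ * N) := mul_le_mul_of_nonneg_left hdom (norm_nonneg _)
        _ = γ * N ^ 2 := by ring
    have hss : β ^ 2 * ‖H j‖ ^ 2 ≤ γ ^ 2 * N ^ 2 := by
      have h12 := mul_self_le_mul_self (mul_nonneg hβ0.le (norm_nonneg (H j))) hdom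
      linarith only [h12]
    have hgain := gain_scalar (N ^ 2) tt (β ^ 2 * ‖H j‖ ^ 2) ((p : ℝ) * L₂ * α) ε γ
      (sq_nonneg N) (neg_le_of_abs_le htt_abs) (le_of_abs_le htt_abs) hss
      (mul_nonneg (mul_nonneg (Nat.cast_nonneg p) hL₂0) hα0.le)
      (by linarith only [hα2]) hγ0 hγε hε1
    have hs2 : g (x (j + 1)) ≤ g (x j) - (1 - ε) * α * N ^ 2 := by
      rw [hstep_eq]
      have hq : ((p : ℝ) * L₂) / 2 * ‖d‖ ^ 2
          = (α / 2) * (((p : ℝ) * L₂ * α) * (N ^ 2 + 2 * tt + β ^ 2 * ‖H j‖ ^ 2)) := by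
        rw [hd_sq]; ring
      have hmul := mul_le_mul_of_nonneg_left hgain (by positivity : (0:ℝ) ≤ α / 2)
      calc g (x j + d) ≤ g (x j) + (inner ℝ (G (x j)) d : ℝ) + ((p : ℝ) * L₂) / 2 * ‖d‖ ^ 2 :=
            htaylor
        _ ≤ g (x j) - (1 - ε) * α * N ^ 2 := by
            rw [hinner_d, hq]
            linarith only [hmul]
    exact ⟨hs1, hs2, hs3⟩
  -- ## the main induction
  have main : ∀ j, j ≤ k →
      (β * Lh / τ ^ (k - j) ≤ γ * ‖G (x j)‖) ∧
      (g (x j) ≤ (1 - δ) ^ j * g x₀) ∧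
      (∀ i, i < j → ‖x (i + 1) - x i‖
        ≤ K * (Real.sqrt (g (x i)) - Real.sqrt (g (x (i + 1))))) := by
    intro j
    induction j with
    | zero =>
        intro _
        refine ⟨by simpa [hx0] using hdom0, by simp [hx0], fun i hi => absurd hi (Nat.not_lt_zero i)⟩
    | succ j ih =>
        intro hjk
        have hjk' : j ≤ k := Nat.le_of_succ_le hjk
        obtain ⟨hA, hB, hsteps⟩ := ih hjk'
        have hball : x j ∈ Metric.closedBall x₀ r := ball_of j hsteps
        have hLhj : ‖H j‖ ≤ Lh := hLh (x j) hball (H j) (hH j)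
        have hτpow : τ ^ (k - j) ≤ 1 := pow_le_one₀ hτpos.le hτlt1.le
        have hτpowpos : 0 < τ ^ (k - j) := pow_pos hτpos _
        have hβLh : β * Lh ≤ β * Lh / τ ^ (k - j) := by
          rw [le_div_iff₀ hτpowpos]
          linarith only [mul_le_mul_of_nonneg_left hτpow (mul_nonneg hβ0.le hLh0)]
        have hdomj : β * ‖H j‖ ≤ γ * ‖G (x j)‖ := by
          calc β * ‖H j‖ ≤ β * Lh := mul_le_mul_of_nonneg_left hLhj hβ0.le
            _ ≤ β * Lh / τ ^ (k - j) := hβLh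
            _ ≤ γ * ‖G (x j)‖ := hA
        obtain ⟨hs1, hs2, hs3⟩ := step_main j hball hdomj
        have hgj_nonneg := hg_nonneg (x j)
        have hgj1_nonneg := hg_nonneg (x (j + 1))
        -- the two contraction statements, by cases on whether g (x j) = 0
        have hkey : g (x (j + 1)) ≤ (1 - δ) * g (x j) ∧
            ‖x (j + 1) - x j‖ ≤ K * (Real.sqrt (g (x j)) - Real.sqrt (g (x (j + 1)))) := by
          by_cases hgj : g (x j) = 0
          · have hN0 : ‖G (x j)‖ = 0 := by
              have h1 := hGsq (x j)
              rw [hgj] at h1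
              have h2 : ‖G (x j)‖ ^ 2 = 0 :=
                le_antisymm (by linarith only [h1]) (sq_nonneg _)
              exact pow_eq_zero_iff (by norm_num : (2:ℕ) ≠ 0) |>.1 h2
            have hG0 : G (x j) = 0 := norm_eq_zero.1 hN0
            have hH0 : H j = 0 := by
              rw [hN0] at hdomj
              have h13 : β * ‖H j‖ = 0 := le_antisymm (by linarith only [hdomj])
                (mul_nonneg hβ0.le (norm_nonneg _))
              have h14 := (mul_eq_zero.1 h13).resolve_left (ne_of_gt hβ0)
              exact norm_eq_zero.1 h14
            have hxeq : x (j + 1) = x j := by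
              rw [hrec j, hG0, hH0]
              simp
            constructor
            · rw [hxeq, hgj]
              simp
            · rw [hxeq]
              simp
          · have hgjpos : 0 < g (x j) := lt_of_le_of_ne hgj_nonneg (Ne.symm hgj)
            have hCLj : χ * g (x j) ≤ ‖G (x j)‖ ^ 2 := hCLineq (x j) hball
            constructor
            · have hmul1 : (1 - ε) * α * (χ * g (x j)) ≤ (1 - ε) * α * ‖G (x j)‖ ^ 2 :=
                mul_le_mul_of_nonneg_left hCLj
                  (mul_nonneg (show (0:ℝ) ≤ 1 - ε by linarith only [hε1]) hα0.le)
              have hmul2 : δ * g (x j) ≤ ((1 - ε) * χ * α) * g (x j) :=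
                mul_le_mul_of_nonneg_right hδle hgj_nonneg
              linarith only [hs2, hmul1, hmul2]
            · set A1 := Real.sqrt (g (x j)) with hA1
              set A2 := Real.sqrt (g (x (j + 1))) with hA2
              have hA1pos : 0 < A1 := Real.sqrt_pos.2 hgjpos
              have hA2nn : 0 ≤ A2 := Real.sqrt_nonneg _
              have hgj1_le : g (x (j + 1)) ≤ g (x j) := by
                have h15 := mul_nonneg (mul_nonneg
                  (show (0:ℝ) ≤ 1 - ε by linarith only [hε1]) hα0.le) (sq_nonneg ‖G (x j)‖)
                linarith only [hs2, h15]
              have h21 : A2 ≤ A1 := Real.sqrt_le_sqrt hgj1_le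
              have hcA1 : c * A1 ≤ ‖G (x j)‖ := by
                have e3 : c * A1 = Real.sqrt (χ * g (x j)) := by
                  rw [hc, hA1, ← Real.sqrt_mul hχpos.le]
                rw [e3]
                have := Real.sqrt_le_sqrt hCLj
                rwa [Real.sqrt_sq (norm_nonneg _)] at this
              have hgain2 : (1 - ε) * α * ‖G (x j)‖ ^ 2 ≤ A1 ^ 2 - A2 ^ 2 := by
                rw [hA1, hA2, Real.sq_sqrt hgj_nonneg, Real.sq_sqrt hgj1_nonneg]
                linarith [hs2]
              have hsb := step_bound_scalar ‖G (x j)‖ A1 A2 c α ε γ hA1pos hA2nn h21 hcpos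
                hε1 hγ0 hα0 hcA1 hgain2
              calc ‖x (j + 1) - x j‖ ≤ α * (1 + γ) * ‖G (x j)‖ := hs1
                _ ≤ 2 * (1 + γ) / ((1 - ε) * c) * (A1 - A2) := hsb
                _ = K * (A1 - A2) := by rw [hK]
        refine ⟨?_, ?_, ?_⟩
        · -- dominance at j+1
          have hm : k - j = (k - (j + 1)) + 1 := by omega
          have heq : β * Lh / τ ^ (k - j) * τ = β * Lh / τ ^ (k - (j + 1)) := by
            rw [hm, pow_succ]
            field_simp
          calc β * Lh / τ ^ (k - (j + 1)) = β * Lh / τ ^ (k - j) * τ := heq.symm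
            _ ≤ (γ * ‖G (x j)‖) * τ := mul_le_mul_of_nonneg_right hA hτpos.le
            _ = γ * (τ * ‖G (x j)‖) := by ring
            _ ≤ γ * ‖G (x (j + 1))‖ := mul_le_mul_of_nonneg_left hs3 hγ0.le
        · calc g (x (j + 1)) ≤ (1 - δ) * g (x j) := hkey.1
            _ ≤ (1 - δ) * ((1 - δ) ^ j * g x₀) :=
              mul_le_mul_of_nonneg_left hB (by linarith)
            _ = (1 - δ) ^ (j + 1) * g x₀ := by ring
        · intro i hi
          rcases Nat.lt_succ_iff_lt_or_eq.1 hi with hi' | hi'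
          · exact hsteps i hi'
          · subst hi'
            exact hkey.2
  -- ball membership for all j ≤ k
  have hballmem : ∀ j, j ≤ k → x j ∈ Metric.closedBall x₀ r :=
    fun j hj => ball_of j (main j hj).2.2
  -- dominance over subgradients for all j ≤ k
  have hsubdom : ∀ j, j ≤ k → ∀ z, IsSubgradientAt h z (x j) → β * ‖z‖ ≤ γ * ‖G (x j)‖ := by
    intro j hj z hz
    have hzLh : ‖z‖ ≤ Lh := hLh (x j) (hballmem j hj) z hz
    have hτpow : τ ^ (k - j) ≤ 1 := pow_le_one₀ hτpos.le hτlt1.le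
    have hτpowpos : 0 < τ ^ (k - j) := pow_pos hτpos _
    have hβLh : β * Lh ≤ β * Lh / τ ^ (k - j) := by
      rw [le_div_iff₀ hτpowpos]
      linarith only [mul_le_mul_of_nonneg_left hτpow (mul_nonneg hβ0.le hLh0)]
    calc β * ‖z‖ ≤ β * Lh := mul_le_mul_of_nonneg_left hzLh hβ0.le
      _ ≤ β * Lh / τ ^ (k - j) := hβLh
      _ ≤ γ * ‖G (x j)‖ := (main j hj).1
  refine ⟨⟨hτpos, hτlt1⟩, fun j hj => (main j hj).1, hsubdom, ?_, ?_, fun j hj => (main j hj).2.1,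
    fun j _ => hGsq (x j), ?_⟩
  · -- the gradient after step k+1
    have hballk : x k ∈ Metric.closedBall x₀ r := hballmem k le_rfl
    have hAk : β * Lh ≤ γ * ‖G (x k)‖ := by
      have := (main k le_rfl).1
      simpa using this
    have hdomk : β * ‖H k‖ ≤ γ * ‖G (x k)‖ := by
      have hLhk : ‖H k‖ ≤ Lh := hLh (x k) hballk (H k) (hH k)
      calc β * ‖H k‖ ≤ β * Lh := mul_le_mul_of_nonneg_left hLhk hβ0.le
        _ ≤ γ * ‖G (x k)‖ := hAk
    obtain ⟨_, _, hs3⟩ := step_main k hballk hdomk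
    have hGk : β * Lh ≤ ‖G (x k)‖ := by
      have h16 := mul_nonneg (show (0:ℝ) ≤ 1 - γ by linarith only [hγε, hε1])
        (norm_nonneg (G (x k)))
      linarith only [hAk, h16]
    calc τ * β * Lh = τ * (β * Lh) := by ring
      _ ≤ τ * ‖G (x k)‖ := mul_le_mul_of_nonneg_left hGk hτpos.le
      _ ≤ ‖G (x (k + 1))‖ := hs3
  · -- ball membership (restricted form asked)
    intro j _ hj
    exact hballmem j hj
  · -- final distance bound
    intro j hj
    obtain ⟨_, hBk, hstepsk⟩ := main k le_rfl
    have htel : x k - x j = ∑ i ∈ Finset.Ico j k, (x (i + 1) - x i) := by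
      rw [Finset.sum_Ico_eq_sub _ hj.le, Finset.sum_range_sub (fun i => x i),
        Finset.sum_range_sub (fun i => x i)]
      abel
    have h1 : ‖x k - x j‖ ≤ ∑ i ∈ Finset.Ico j k, ‖x (i + 1) - x i‖ := by
      rw [htel]; exact norm_sum_le _ _
    have h2 : (∑ i ∈ Finset.Ico j k, ‖x (i + 1) - x i‖)
        ≤ K * (Real.sqrt (g (x j)) - Real.sqrt (g (x k))) := by
      calc (∑ i ∈ Finset.Ico j k, ‖x (i + 1) - x i‖)
          ≤ ∑ i ∈ Finset.Ico j k, K * (Real.sqrt (g (x i)) - Real.sqrt (g (x (i + 1)))) := by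
            apply Finset.sum_le_sum
            intro i hi
            exact hstepsk i (Finset.mem_Ico.1 hi).2
        _ = K * ∑ i ∈ Finset.Ico j k,
              (Real.sqrt (g (x i)) - Real.sqrt (g (x (i + 1)))) := by rw [Finset.mul_sum]
        _ = K * (Real.sqrt (g (x j)) - Real.sqrt (g (x k))) := by
            rw [Finset.sum_Ico_eq_sub _ hj.le,
              Finset.sum_range_sub' (fun i => Real.sqrt (g (x i))),
              Finset.sum_range_sub' (fun i => Real.sqrt (g (x i)))]
            ring
    have h3 : ‖x k - x j‖ ≤ K * Real.sqrt (g (x j)) := by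
      have h17 := mul_nonneg hKpos.le (Real.sqrt_nonneg (g (x k)))
      linarith only [h1, h2, h17]
    have hgj_le : g (x j) ≤ (1 - δ) ^ j * g x₀ := (main j hj.le).2.1
    have h4 : ‖x k - x j‖ ^ 2 ≤ K ^ 2 * g (x j) := by
      have := pow_le_pow_left₀ (norm_nonneg _) h3 2
      rwa [mul_pow, Real.sq_sqrt (hg_nonneg (x j))] at this
    have h5 : K ^ 2 * g x₀ ≤ r ^ 2 := by
      have := pow_le_pow_left₀ (by positivity : (0:ℝ) ≤ K * Real.sqrt (g x₀)) hKr.le 2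
      rwa [mul_pow, Real.sq_sqrt (hg_nonneg x₀)] at this
    have h6 : K ^ 2 * g (x j) ≤ K ^ 2 * ((1 - δ) ^ j * g x₀) :=
      mul_le_mul_of_nonneg_left hgj_le (by positivity)
    have h7 : (0:ℝ) ≤ (1 - δ) ^ j := pow_nonneg (by linarith) j
    calc ‖x k - x j‖ ^ 2 ≤ K ^ 2 * g (x j) := h4
      _ ≤ K ^ 2 * ((1 - δ) ^ j * g x₀) := h6
      _ = (1 - δ) ^ j * (K ^ 2 * g x₀) := by ring
      _ ≤ (1 - δ) ^ j * r ^ 2 := mul_le_mul_of_nonneg_left h5 h7
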